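/- For any graph G and any link (non-loop edge) e of G, contraction of e in the bicircular lift matroid commutes with graph contraction: L(G)/e = L(G/e). -/

import Mathlib

open Finset

/-- A multigraph with vertex type `V`, edge-label type `α`, edge set `E`,
and an endpoints function assigning to each edge an unordered pair of vertices. -/
structure MGraph (V : Type) (α : Type) where
  E : Finset α
  ends : α → Sym2 V

namespace MGraph

variable {V V₁ V₂ : Type} {α : Type} [DecidableEq V] [DecidableEq V₁] [DecidableEq V₂]
  [DecidableEq α]

/-- `u` and `v` are joined by an edge of `X`. -/
def Adj (G : MGraph V α) (X : Finset α) (u v : V) : Prop :=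
  ∃ e ∈ X, G.ends e = s(u, v)

/-- `v` is incident with an edge of `X`. -/
def VIn (G : MGraph V α) (X : Finset α) (v : V) : Prop :=
  ∃ e ∈ X, v ∈ G.ends e

/-- The degree of `v` in the edge set `X` (loops count twice). -/
def degIn (G : MGraph V α) (X : Finset α) (v : V) : ℕ :=
  ∑ e ∈ X, (if G.ends e = s(v, v) then 2 else if v ∈ G.ends e then 1 else 0)

/-- `C` is the edge set of a cycle of `G`: a nonempty connected 2-regular subgraph. -/
def IsCycle (G : MGraph V α) (C : Finset α) : Prop :=
  C.Nonempty ∧ C ⊆ G.E ∧ (∀ v, G.VIn C v → G.degIn C v = 2) ∧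
    ∀ u v, G.VIn C u → G.VIn C v → Relation.ReflTransGen (G.Adj C) u v

/-- The subgraph on edge set `X` contains at least two (distinct) cycles. -/
def TwoCycles (G : MGraph V α) (X : Finset α) : Prop :=
  ∃ C₁ C₂ : Finset α, G.IsCycle C₁ ∧ G.IsCycle C₂ ∧ C₁ ⊆ X ∧ C₂ ⊆ X ∧ C₁ ≠ C₂

/-- `X` is a circuit of the bicircular lift matroid `L(G)`: a minimal edge set
containing at least two cycles. -/
def LiftCircuit (G : MGraph V α) (X : Finset α) : Prop :=
  X ⊆ G.E ∧ G.TwoCycles X ∧ ∀ Y ⊂ X, ¬ G.TwoCycles Y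

/-- `X` is independent in the bicircular lift matroid `L(G)`. -/
def LiftIndep (G : MGraph V α) (X : Finset α) : Prop :=
  X ⊆ G.E ∧ ∀ C ⊆ X, ¬ G.LiftCircuit C

/-- `L(G)` has at least two circuits. -/
def TwoLiftCircuits (G : MGraph V α) : Prop :=
  ∃ X Y : Finset α, G.LiftCircuit X ∧ G.LiftCircuit Y ∧ X ≠ Y

/-- Equality of the bicircular lift matroids `L(G₁) = L(G₂)` (equal ground sets
and equal circuit collections). -/
def LiftEq (G₁ : MGraph V₁ α) (G₂ : MGraph V₂ α) : Prop :=
  G₁.E = G₂.E ∧ ∀ X : Finset α, G₁.LiftCircuit X ↔ G₂.LiftCircuit X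

/-- `G₁` and `G₂` are 2-isomorphic, i.e. their graphic matroids on the common
edge set are equal (equivalently, they have the same cycles). -/
def TwoIso (G₁ : MGraph V₁ α) (G₂ : MGraph V₂ α) : Prop :=
  G₁.E = G₂.E ∧ ∀ X : Finset α, G₁.IsCycle X ↔ G₂.IsCycle X

/-- `G` has no loops. -/
def Loopless (G : MGraph V α) : Prop := ∀ e ∈ G.E, ¬ (G.ends e).IsDiag

/-- `G` is connected. -/
def Connected (G : MGraph V α) : Prop :=
  ∀ u v : V, Relation.ReflTransGen (G.Adj G.E) u v

/-- `G` is 2-edge-connected: every edge lies in a cycle. -/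
def TwoEdgeConnected (G : MGraph V α) : Prop :=
  ∀ e ∈ G.E, ∃ C : Finset α, G.IsCycle C ∧ e ∈ C

/-- `e` is a cut-edge of `G`: an edge contained in no cycle. -/
def IsCutEdge (G : MGraph V α) (e : α) : Prop :=
  e ∈ G.E ∧ ∀ C : Finset α, G.IsCycle C → e ∉ C

/-- Deletion of the edge `e` from `G`. -/
def delete (G : MGraph V α) (e : α) : MGraph V α :=
  ⟨G.E.erase e, G.ends⟩

/-- Restriction of `G` to the edge set `X`. -/
def restrict (G : MGraph V α) (X : Finset α) : MGraph V α :=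
  ⟨G.E ∩ X, G.ends⟩

/-- Contraction of the link `e` with endpoints `u, v`: the edge `e` is deleted
and the vertex `v` is identified with `u`. -/
def contractLink (G : MGraph V α) (e : α) (u v : V) : MGraph V α :=
  ⟨G.E.erase e, fun f => (G.ends f).map (fun w => if w = v then u else w)⟩

/-- `X` is a circuit of the contraction `M/e`, where `M` is the matroid with
circuit collection `Circ`: the circuits of `M/e` are the minimal nonempty sets of
the form `C \ {e}` with `C` a circuit of `M`. -/
def ContractCircuit (Circ : Finset α → Prop) (e : α) (X : Finset α) : Prop :=
  (X.Nonempty ∧ ∃ C : Finset α, Circ C ∧ X = C.erase e) ∧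
    ∀ Y ⊂ X, ¬ (Y.Nonempty ∧ ∃ C : Finset α, Circ C ∧ Y = C.erase e)

/-- `e` and `f` form a series pair: no cycle contains exactly one of them. -/
def SeriesPair (G : MGraph V α) (e f : α) : Prop :=
  e ∈ G.E ∧ f ∈ G.E ∧ ∀ C : Finset α, G.IsCycle C → (e ∈ C ↔ f ∈ C)

/-- `X` is a series class of `G`: a maximal set of pairwise series edges. -/
def SeriesClass (G : MGraph V α) (X : Finset α) : Prop :=
  X ⊆ G.E ∧ X.Nonempty ∧ (∀ e ∈ X, ∀ f ∈ X, G.SeriesPair e f) ∧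
    ∀ g ∈ G.E, (∀ e ∈ X, G.SeriesPair e g) → g ∈ X

/-- `G` is cosimple: no cut-edges and no nontrivial series classes. -/
def CoSimple (G : MGraph V α) : Prop :=
  (∀ e ∈ G.E, ¬ G.IsCutEdge e) ∧
    ∀ e ∈ G.E, ∀ f ∈ G.E, e ≠ f → ¬ G.SeriesPair e f

/-- `e` and `f` are parallel edges. -/
def Parallel (G : MGraph V α) (e f : α) : Prop :=
  e ≠ f ∧ G.IsCycle {e, f}

/-- `P` is a parallel class of `G`: a maximal set of pairwise parallel non-loop
edges. -/
def ParallelClass (G : MGraph V α) (P : Finset α) : Prop :=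
  P ⊆ G.E ∧ P.Nonempty ∧ (∀ e ∈ P, ¬ (G.ends e).IsDiag) ∧
    (∀ e ∈ P, ∀ f ∈ P, e ≠ f → G.Parallel e f) ∧
    ∀ g ∈ G.E, g ∉ P → ¬ (G.ends g).IsDiag → ∃ e ∈ P, ¬ G.Parallel e g

/-- `P` is the edge set of a path of `G`: nonempty, acyclic, connected, with all
degrees at most two. -/
def IsPath (G : MGraph V α) (P : Finset α) : Prop :=
  P.Nonempty ∧ P ⊆ G.E ∧ (∀ C ⊆ P, ¬ G.IsCycle C) ∧
    (∀ v, G.VIn P v → G.degIn P v ≤ 2) ∧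
    ∀ u v, G.VIn P u → G.VIn P v → Relation.ReflTransGen (G.Adj P) u v

/-- `P` is the edge set of a path of `G` with end-vertices `x` and `y`. -/
def PathBetween (G : MGraph V α) (P : Finset α) (x y : V) : Prop :=
  G.IsPath P ∧ x ≠ y ∧ G.degIn P x = 1 ∧ G.degIn P y = 1 ∧
    ∀ v, G.degIn P v = 1 → v = x ∨ v = y

/-- `P` is the edge set of an ear of `G`: a path contained in a cycle, whose
internal vertices have degree two in `G` and whose end-vertices have degree at
least three in `G`. -/
def IsEar (G : MGraph V α) (P : Finset α) : Prop :=
  G.IsPath P ∧ (∀ v, G.degIn P v = 2 → G.degIn G.E v = 2) ∧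
    (∀ v, G.degIn P v = 1 → 3 ≤ G.degIn G.E v) ∧
    ∃ C : Finset α, G.IsCycle C ∧ P ⊆ C

/-- `G` is a subdivision of `K_2^n`: two distinct branch vertices joined by `n`
internally disjoint paths whose edge sets partition `E(G)`. -/
def IsK2nSub (G : MGraph V α) (n : ℕ) : Prop :=
  ∃ x y : V, x ≠ y ∧ ∃ P : Fin n → Finset α,
    (G.E = Finset.univ.biUnion fun i => P i) ∧
    (∀ i j : Fin n, i ≠ j → Disjoint (P i) (P j)) ∧
    (∀ i : Fin n, G.PathBetween (P i) x y) ∧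
    (∀ i j : Fin n, i ≠ j → ∀ v, G.VIn (P i) v → G.VIn (P j) v → v = x ∨ v = y)

/-- `G` is a subdivision of `K_2^n` with the edge `e` lying on one of the `n`
paths. -/
def IsK2nSubThrough (G : MGraph V α) (n : ℕ) (e : α) : Prop :=
  ∃ x y : V, x ≠ y ∧ ∃ P : Fin n → Finset α,
    (G.E = Finset.univ.biUnion fun i => P i) ∧
    (∀ i j : Fin n, i ≠ j → Disjoint (P i) (P j)) ∧
    (∀ i : Fin n, G.PathBetween (P i) x y) ∧
    (∀ i j : Fin n, i ≠ j → ∀ v, G.VIn (P i) v → G.VIn (P j) v → v = x ∨ v = y) ∧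
    ∃ i : Fin n, e ∈ P i

/-- `T` is the edge set of a spanning tree of `G`. -/
def IsSpanningTree (G : MGraph V α) (T : Finset α) : Prop :=
  T ⊆ G.E ∧ (∀ C ⊆ T, ¬ G.IsCycle C) ∧
    ∀ u v : V, Relation.ReflTransGen (G.Adj T) u v

end MGraph

set_option maxHeartbeats 1000000
set_option linter.unusedSectionVars false

namespace MGraph

variable {V α : Type} [DecidableEq V] [DecidableEq α]

/-- collapse `b` into `a` -/
def clp (a b : V) : V → V := fun w => if w = b then a else w

/-- contribution of an edge with endpoints `z` to the degree of `w` -/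
def ctr (z : Sym2 V) (w : V) : ℕ := if z = s(w,w) then 2 else if w ∈ z then 1 else 0

lemma degIn_eq (G : MGraph V α) (S : Finset α) (w : V) :
    G.degIn S w = ∑ g ∈ S, ctr (G.ends g) w := rfl

lemma clp_self (a b : V) : clp a b b = a := by simp [clp]
lemma clp_of_ne {a b w : V} (h : w ≠ b) : clp a b w = w := by simp [clp, h]
lemma clp_ne_b {a b : V} (hab : a ≠ b) (w : V) : clp a b w ≠ b := by
  unfold clp; split_ifs with h; exact hab; exact h

lemma clp_eq_cases {a b p q : V} (h : clp a b p = clp a b q) :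
    p = q ∨ ((p = a ∨ p = b) ∧ (q = a ∨ q = b)) := by
  unfold clp at h; split_ifs at h <;> simp_all <;> tauto

lemma ctr_pos_iff {z : Sym2 V} {w : V} : 0 < ctr z w ↔ w ∈ z := by
  unfold ctr; split_ifs with h1 h2 <;> simp_all

lemma ctr_of_mem_of_ne {z : Sym2 V} {w : V} (hm : w ∈ z) (hd : z ≠ s(w,w)) : ctr z w = 1 := by
  simp [ctr, hd, hm]

lemma ctr_eq_zero {z : Sym2 V} {w : V} (hm : w ∉ z) : ctr z w = 0 := by
  have : z ≠ s(w,w) := fun h => hm (h ▸ Sym2.mem_mk_left w w)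
  simp [ctr, this, hm]

lemma ctr_pair_left {a b : V} (hab : a ≠ b) : ctr s(a,b) a = 1 :=
  ctr_of_mem_of_ne (Sym2.mem_mk_left a b) (by simp [Sym2.eq_iff]; tauto)

lemma ctr_pair_right {a b : V} (hab : a ≠ b) : ctr s(a,b) b = 1 :=
  ctr_of_mem_of_ne (Sym2.mem_mk_right a b) (by simp [Sym2.eq_iff]; tauto)

lemma ctr_pair (p q w : V) :
    ctr s(p,q) w = if p = w ∧ q = w then 2 else if p = w ∨ q = w then 1 else 0 := by
  by_cases h1 : p = w <;> by_cases h2 : q = w <;> simp [ctr, Sym2.eq_iff, Sym2.mem_iff, h1, h2, eq_comm]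

lemma clp_eq_ne {a b w : V} (hwa : w ≠ a) (hwb : w ≠ b) (p : V) : (clp a b p = w) ↔ p = w := by
  unfold clp; split_ifs with h
  · subst h; exact ⟨fun ha => absurd ha.symm hwa, fun hb => absurd hb hwb.symm⟩
  · exact Iff.rfl

lemma clp_eq_a {a b : V} (p : V) : (clp a b p = a) ↔ (p = a ∨ p = b) := by
  unfold clp; split_ifs with h <;> simp [h]

lemma ctr_clp_other {a b w : V} (hwa : w ≠ a) (hwb : w ≠ b) (z : Sym2 V) :
    ctr (z.map (clp a b)) w = ctr z w := by
  induction z using Sym2.ind with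
  | _ p q =>
    rw [Sym2.map_pair_eq, ctr_pair, ctr_pair]
    simp only [clp_eq_ne hwa hwb]

lemma ctr_clp_a {a b : V} (hab : a ≠ b) (z : Sym2 V) :
    ctr (z.map (clp a b)) a = ctr z a + ctr z b := by
  induction z using Sym2.ind with
  | _ p q =>
    rw [Sym2.map_pair_eq, ctr_pair, ctr_pair, ctr_pair]
    simp only [clp_eq_a]
    by_cases h1 : p = a <;> by_cases h2 : p = b <;> by_cases h3 : q = a <;> by_cases h4 : q = b <;>
      simp_all <;> omega

lemma sym2_map_eq_of_fix {c : V → V} {z : Sym2 V} (h : ∀ p ∈ z, c p = p) : z.map c = z := by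
  induction z using Sym2.ind with
  | _ p q =>
    rw [Sym2.map_pair_eq, h p (Sym2.mem_mk_left p q), h q (Sym2.mem_mk_right p q)]

lemma sym2_map_congr {c d : V → V} {z : Sym2 V} (h : ∀ p ∈ z, c p = d p) : z.map c = z.map d := by
  induction z using Sym2.ind with
  | _ p q =>
    rw [Sym2.map_pair_eq, Sym2.map_pair_eq, h p (Sym2.mem_mk_left p q), h q (Sym2.mem_mk_right p q)]

lemma sym2_map_surj {c : V → V} {z : Sym2 V} {m n : V} (h : z.map c = s(m,n)) :
    ∃ m₁ n₁, z = s(m₁,n₁) ∧ c m₁ = m ∧ c n₁ = n := by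
  induction z using Sym2.ind with
  | _ p q =>
    rw [Sym2.map_pair_eq, Sym2.eq_iff] at h
    rcases h with ⟨h1, h2⟩ | ⟨h1, h2⟩
    · exact ⟨p, q, rfl, h1, h2⟩
    · exact ⟨q, p, Sym2.eq_swap, h2, h1⟩

variable {G H : MGraph V α} {S T : Finset α} {w : V}

lemma vin_of_degIn_pos (h : 0 < G.degIn S w) : G.VIn S w := by
  rw [degIn_eq] at h
  obtain ⟨g, hg, hpos⟩ : ∃ g ∈ S, 0 < ctr (G.ends g) w := by
    by_contra hc
    push_neg at hc
    have : ∑ g ∈ S, ctr (G.ends g) w = 0 := Finset.sum_eq_zero (fun g hg => by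
      have := hc g hg; omega)
    omega
  exact ⟨g, hg, ctr_pos_iff.mp hpos⟩

lemma degIn_pos_of_vin (h : G.VIn S w) : 0 < G.degIn S w := by
  obtain ⟨g, hg, hm⟩ := h
  rw [degIn_eq]
  have h1 : ctr (G.ends g) w ≤ ∑ g ∈ S, ctr (G.ends g) w :=
    Finset.single_le_sum (f := fun g => ctr (G.ends g) w) (fun _ _ => Nat.zero_le _) hg
  have h2 := ctr_pos_iff.mpr hm
  omega

lemma degIn_eq_zero_of_not_vin (h : ¬ G.VIn S w) : G.degIn S w = 0 := by
  by_contra hc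
  exact h (vin_of_degIn_pos (Nat.pos_of_ne_zero hc))

lemma degIn_mono (h : S ⊆ T) : G.degIn S w ≤ G.degIn T w := by
  rw [degIn_eq, degIn_eq]; exact Finset.sum_le_sum_of_subset h

lemma degIn_erase {f : α} (hf : f ∈ S) :
    G.degIn S w = ctr (G.ends f) w + G.degIn (S.erase f) w := by
  rw [degIn_eq, degIn_eq]; exact (Finset.add_sum_erase S _ hf).symm

lemma ctr_le_degIn {f : α} (hf : f ∈ S) : ctr (G.ends f) w ≤ G.degIn S w := by
  rw [degIn_eq]
  exact Finset.single_le_sum (f := fun g => ctr (G.ends g) w) (fun _ _ => Nat.zero_le _) hf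

lemma pair_le_degIn {f g : α} (hf : f ∈ S) (hg : g ∈ S) (hfg : f ≠ g) :
    ctr (G.ends f) w + ctr (G.ends g) w ≤ G.degIn S w := by
  rw [degIn_erase hf]
  have : g ∈ S.erase f := Finset.mem_erase.mpr ⟨fun h => hfg h.symm, hg⟩
  exact Nat.add_le_add_left (ctr_le_degIn this) _

lemma unique_edge_at {f g : α} (hdeg : G.degIn S w ≤ 1) (hf : f ∈ S) (hg : g ∈ S)
    (hwf : w ∈ G.ends f) (hwg : w ∈ G.ends g) : f = g := by
  by_contra hne
  have := pair_le_degIn (G := G) (w := w) hf hg hne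
  have h1 := ctr_pos_iff.mpr hwf
  have h2 := ctr_pos_iff.mpr hwg
  omega

lemma vin_mono (h : S ⊆ T) (hw : G.VIn S w) : G.VIn T w := by
  obtain ⟨g, hg, hm⟩ := hw; exact ⟨g, h hg, hm⟩

lemma degIn_congr (h : ∀ g ∈ S, H.ends g = G.ends g) : H.degIn S w = G.degIn S w := by
  rw [degIn_eq, degIn_eq]; exact Finset.sum_congr rfl (fun g hg => by rw [h g hg])

lemma vin_congr (h : ∀ g ∈ S, H.ends g = G.ends g) (hw : H.VIn S w) : G.VIn S w := by
  obtain ⟨g, hg, hm⟩ := hw; exact ⟨g, hg, h g hg ▸ hm⟩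

lemma adj_symm {p q : V} (h : G.Adj S p q) : G.Adj S q p := by
  obtain ⟨g, hg, hm⟩ := h; exact ⟨g, hg, hm.trans Sym2.eq_swap⟩

lemma adj_congr (h : ∀ g ∈ S, H.ends g = G.ends g) {p q : V} (ha : H.Adj S p q) : G.Adj S p q := by
  obtain ⟨g, hg, hm⟩ := ha; exact ⟨g, hg, h g hg ▸ hm⟩

lemma isCycle_congr (h : ∀ g ∈ S, H.ends g = G.ends g) (hSE : S ⊆ G.E) (hc : H.IsCycle S) :
    G.IsCycle S := by
  obtain ⟨hne, _, hdeg, hconn⟩ := hc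
  have h' : ∀ g ∈ S, G.ends g = H.ends g := fun g hg => (h g hg).symm
  refine ⟨hne, hSE, fun w hw => ?_, fun p q hp hq => ?_⟩
  · rw [← degIn_congr h]; exact hdeg w (vin_congr h' hw)
  · have := hconn p q (vin_congr h' hp) (vin_congr h' hq)
    exact Relation.ReflTransGen.mono (fun a b => adj_congr h) _ _ this

section clpfacts
variable {a b : V}

lemma degIn_clp_other (hH : ∀ g ∈ S, H.ends g = (G.ends g).map (clp a b))
    (hwa : w ≠ a) (hwb : w ≠ b) : H.degIn S w = G.degIn S w := by
  rw [degIn_eq, degIn_eq]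
  exact Finset.sum_congr rfl (fun g hg => by rw [hH g hg, ctr_clp_other hwa hwb])

lemma degIn_clp_a (hH : ∀ g ∈ S, H.ends g = (G.ends g).map (clp a b)) (hab : a ≠ b) :
    H.degIn S a = G.degIn S a + G.degIn S b := by
  rw [degIn_eq, degIn_eq, degIn_eq, ← Finset.sum_add_distrib]
  exact Finset.sum_congr rfl (fun g hg => by rw [hH g hg, ctr_clp_a hab])

lemma vin_clp (hH : ∀ g ∈ S, H.ends g = (G.ends g).map (clp a b)) (hw : G.VIn S w) :
    H.VIn S (clp a b w) := by
  obtain ⟨g, hg, hm⟩ := hw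
  exact ⟨g, hg, by rw [hH g hg]; exact Sym2.mem_map.mpr ⟨w, hm, rfl⟩⟩

lemma vin_unclp (hH : ∀ g ∈ S, H.ends g = (G.ends g).map (clp a b)) (hw : H.VIn S w) :
    ∃ w₀, clp a b w₀ = w ∧ G.VIn S w₀ := by
  obtain ⟨g, hg, hm⟩ := hw
  rw [hH g hg] at hm
  obtain ⟨w₀, hw₀, hcw⟩ := Sym2.mem_map.mp hm
  exact ⟨w₀, hcw, g, hg, hw₀⟩

lemma not_vin_clp_b (hH : ∀ g ∈ S, H.ends g = (G.ends g).map (clp a b)) (hab : a ≠ b) :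
    ¬ H.VIn S b := by
  intro hw
  obtain ⟨w₀, hcw, _⟩ := vin_unclp hH hw
  exact clp_ne_b hab w₀ hcw

lemma vin_unclp_ne (hH : ∀ g ∈ S, H.ends g = (G.ends g).map (clp a b))
    (hwa : w ≠ a) (hwb : w ≠ b) (hw : H.VIn S w) : G.VIn S w := by
  obtain ⟨w₀, hcw, hv⟩ := vin_unclp hH hw
  have hww : w₀ = w := by
    by_cases h : w₀ = b
    · rw [h, clp_self] at hcw; exact absurd hcw.symm hwa
    · rwa [clp_of_ne h] at hcw
  rwa [hww] at hv

end clpfacts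

lemma rtg_push {c : V → V}
    (hstep : ∀ g ∈ S, ∀ p q : V, G.ends g = s(p,q) →
      Relation.ReflTransGen (H.Adj T) (c p) (c q)) :
    ∀ {p q : V}, Relation.ReflTransGen (G.Adj S) p q →
      Relation.ReflTransGen (H.Adj T) (c p) (c q) := by
  intro p q h
  induction h with
  | refl => exact Relation.ReflTransGen.refl
  | tail _ hadj ih =>
    obtain ⟨g, hg, hm⟩ := hadj
    exact ih.trans (hstep g hg _ _ hm)

lemma rtg_lift {c : V → V} {K H' : MGraph V α} {C T : Finset α}
    (hCT : C ⊆ T) (hH : ∀ g ∈ C, H'.ends g = (K.ends g).map c)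
    (hfib : ∀ p q : V, c p = c q → Relation.ReflTransGen (K.Adj T) p q) :
    ∀ {y z : V}, Relation.ReflTransGen (H'.Adj C) y z →
      ∀ y₀, c y₀ = y → ∃ z₀, c z₀ = z ∧ Relation.ReflTransGen (K.Adj T) y₀ z₀ := by
  intro y z h
  induction h with
  | refl => exact fun y₀ h₀ => ⟨y₀, h₀, Relation.ReflTransGen.refl⟩
  | @tail m z _ hadj ih =>
    intro y₀ h₀
    obtain ⟨m₀, hm₀, hpath⟩ := ih y₀ h₀
    obtain ⟨g, hg, hm⟩ := hadj
    rw [hH g hg] at hm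
    obtain ⟨m₁, z₁, hz, hcm, hcz⟩ := sym2_map_surj hm
    refine ⟨z₁, hcz, hpath.trans ((hfib m₀ m₁ (hm₀.trans hcm.symm)).trans ?_)⟩
    exact Relation.ReflTransGen.single ⟨g, hCT hg, hz⟩

lemma exists_mem_sym2 (z : Sym2 V) : ∃ w, w ∈ z := by
  induction z using Sym2.ind with
  | _ p q => exact ⟨p, Sym2.mem_mk_left p q⟩

lemma eq_of_subset_cycle {C D : Finset α} (hD : G.IsCycle D) (hCD : C ⊆ D) (hne : C.Nonempty)
    (hreg : ∀ w, G.VIn C w → G.degIn C w = 2) : C = D := by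
  obtain ⟨hDne, hDE, hDdeg, hDconn⟩ := hD
  have hclosed : ∀ w, G.VIn C w → ∀ g ∈ D, w ∈ G.ends g → g ∈ C := by
    intro w hw g hg hm
    by_contra hgC
    have hCsub : C ⊆ D.erase g := fun h hh =>
      Finset.mem_erase.mpr ⟨fun he => hgC (he ▸ hh), hCD hh⟩
    have h0 := degIn_mono (G := G) (w := w) hCsub
    have h1 := degIn_erase (G := G) (w := w) hg
    have h2 := hreg w hw
    have h3 := hDdeg w (vin_mono hCD hw)
    have h4 := ctr_pos_iff.mpr hm
    omega
  have hreach : ∀ p q, Relation.ReflTransGen (G.Adj D) p q → G.VIn C p → G.VIn C q := by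
    intro p q h
    induction h with
    | refl => exact id
    | @tail m q _ hadj ih =>
      intro hp
      obtain ⟨g, hg, hm⟩ := hadj
      have hmC : m ∈ G.ends g := hm ▸ Sym2.mem_mk_left m q
      have hqC : q ∈ G.ends g := hm ▸ Sym2.mem_mk_right m q
      exact ⟨g, hclosed m (ih hp) g hg hmC, hqC⟩
  refine Finset.Subset.antisymm hCD (fun h hh => ?_)
  obtain ⟨g₀, hg₀⟩ := hne
  obtain ⟨w₀, hw₀⟩ := exists_mem_sym2 (G.ends g₀)
  obtain ⟨wh, hwh⟩ := exists_mem_sym2 (G.ends h)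
  have hVC0 : G.VIn C w₀ := ⟨g₀, hg₀, hw₀⟩
  have hVCh := hreach w₀ wh (hDconn w₀ wh (vin_mono hCD hVC0) ⟨h, hh, hwh⟩) hVC0
  exact hclosed wh hVCh h hh hwh

lemma cycle_contract {D : Finset α} {f : α} {a b : V}
    (hD : G.IsCycle D) (hf : f ∈ D) (hab : a ≠ b) (hends : G.ends f = s(a,b))
    (hHE : D.erase f ⊆ H.E) (hH : ∀ g ∈ D, H.ends g = (G.ends g).map (clp a b)) :
    H.IsCycle (D.erase f) := by
  obtain ⟨hDne, hDE, hdeg, hconn⟩ := hD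
  have hH' : ∀ g ∈ D.erase f, H.ends g = (G.ends g).map (clp a b) :=
    fun g hg => hH g (Finset.mem_erase.mp hg).2
  have hVa : G.VIn D a := ⟨f, hf, hends ▸ Sym2.mem_mk_left a b⟩
  have hVb : G.VIn D b := ⟨f, hf, hends ▸ Sym2.mem_mk_right a b⟩
  have hdega : G.degIn (D.erase f) a = 1 := by
    have h1 := degIn_erase (G := G) (w := a) hf
    rw [hends, ctr_pair_left hab] at h1
    have h2 := hdeg a hVa; omega
  have hdegb : G.degIn (D.erase f) b = 1 := by
    have h1 := degIn_erase (G := G) (w := b) hf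
    rw [hends, ctr_pair_right hab] at h1
    have h2 := hdeg b hVb; omega
  have hne : (D.erase f).Nonempty := by
    rcases Finset.eq_empty_or_nonempty (D.erase f) with h | h
    · exfalso
      have hsub : D ⊆ {f} := fun g hg => Finset.mem_singleton.mpr (by
        by_contra hgf
        exact Finset.notMem_empty g (h ▸ Finset.mem_erase.mpr ⟨hgf, hg⟩))
      have h1 : G.degIn D a ≤ G.degIn {f} a := degIn_mono hsub
      have h2 : G.degIn {f} a = 1 := by
        rw [degIn_eq, Finset.sum_singleton, hends, ctr_pair_left hab]
      have h3 := hdeg a hVa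
      omega
    · exact h
  have hstep : ∀ g ∈ D, ∀ x y : V, G.ends g = s(x,y) →
      Relation.ReflTransGen (H.Adj (D.erase f)) (clp a b x) (clp a b y) := by
    intro g hg x y hxy
    by_cases hgf : g = f
    · subst hgf
      rw [hends] at hxy
      have heq : clp a b x = clp a b y := by
        rcases Sym2.eq_iff.mp hxy with ⟨h1, h2⟩ | ⟨h1, h2⟩
        · rw [← h1, ← h2, clp_of_ne hab, clp_self]
        · rw [← h1, ← h2, clp_of_ne hab, clp_self]
      rw [heq]
    · exact Relation.ReflTransGen.single
        ⟨g, Finset.mem_erase.mpr ⟨hgf, hg⟩, by rw [hH g hg, hxy, Sym2.map_pair_eq]⟩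
  refine ⟨hne, hHE, ?_, ?_⟩
  · intro w hw
    by_cases hwb : w = b
    · exact absurd (hwb ▸ hw) (not_vin_clp_b hH' hab)
    by_cases hwa : w = a
    · subst hwa
      rw [degIn_clp_a hH' hab, hdega, hdegb]
    · rw [degIn_clp_other hH' hwa hwb]
      have hVw : G.VIn (D.erase f) w := vin_unclp_ne hH' hwa hwb hw
      have h2 := hdeg w (vin_mono (Finset.erase_subset f D) hVw)
      have h3 := degIn_erase (G := G) (w := w) hf
      have h4 : ctr (G.ends f) w = 0 := by
        rw [hends]
        exact ctr_eq_zero (by rw [Sym2.mem_iff]; push_neg; exact ⟨hwa, hwb⟩)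
      omega
  · intro p q hp hq
    obtain ⟨p₀, hcp, hVp⟩ := vin_unclp hH' hp
    obtain ⟨q₀, hcq, hVq⟩ := vin_unclp hH' hq
    have hpath := hconn p₀ q₀ (vin_mono (Finset.erase_subset f D) hVp)
      (vin_mono (Finset.erase_subset f D) hVq)
    have hpush := rtg_push hstep hpath
    rwa [hcp, hcq] at hpush

lemma cycle_avoid {D : Finset α} {a b : V} (hab : a ≠ b)
    (hD : G.IsCycle D) (hHE : D ⊆ H.E)
    (hH : ∀ g ∈ D, H.ends g = (G.ends g).map (clp a b))
    (hnot : ¬ G.VIn D a ∨ ¬ G.VIn D b) : H.IsCycle D := by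
  obtain ⟨hDne, hDE, hdeg, hconn⟩ := hD
  refine ⟨hDne, hHE, ?_, ?_⟩
  · intro w hw
    by_cases hwb : w = b
    · exact absurd (hwb ▸ hw) (not_vin_clp_b hH hab)
    by_cases hwa : w = a
    · subst hwa
      rw [degIn_clp_a hH hab]
      obtain ⟨w₀, hcw, hV₀⟩ := vin_unclp hH hw
      have hw₀ab : w₀ = w ∨ w₀ = b := by
        by_cases h : w₀ = b
        · exact Or.inr h
        · left; rwa [clp_of_ne h] at hcw
      rcases hnot with hna | hnb
      · have hw₀b : w₀ = b := by
          rcases hw₀ab with h | h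
          · exact absurd (h ▸ hV₀) hna
          · exact h
        rw [degIn_eq_zero_of_not_vin hna, hdeg b (hw₀b ▸ hV₀)]
      · have hw₀a : w₀ = w := by
          rcases hw₀ab with h | h
          · exact h
          · exact absurd (h ▸ hV₀) hnb
        rw [degIn_eq_zero_of_not_vin hnb, hdeg w (hw₀a ▸ hV₀)]
    · rw [degIn_clp_other hH hwa hwb]
      exact hdeg w (vin_unclp_ne hH hwa hwb hw)
  · intro p q hp hq
    obtain ⟨p₀, hcp, hVp⟩ := vin_unclp hH hp
    obtain ⟨q₀, hcq, hVq⟩ := vin_unclp hH hq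
    have hstep : ∀ g ∈ D, ∀ x y : V, G.ends g = s(x,y) →
        Relation.ReflTransGen (H.Adj D) (clp a b x) (clp a b y) :=
      fun g hg x y hxy => Relation.ReflTransGen.single
        ⟨g, hg, by rw [hH g hg, hxy, Sym2.map_pair_eq]⟩
    have := rtg_push hstep (hconn p₀ q₀ hVp hVq)
    rwa [hcp, hcq] at this

lemma cycle_uncontract {K H' : MGraph V α} {C : Finset α} {f : α} {a b : V}
    (hab : a ≠ b) (hf : f ∉ C) (hends : K.ends f = s(a,b))
    (hH : ∀ g ∈ C, H'.ends g = (K.ends g).map (clp a b))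
    (hcyc : H'.IsCycle C) (hdega : K.degIn C a = 1) (hdegb : K.degIn C b = 1)
    (hKE : insert f C ⊆ K.E) : K.IsCycle (insert f C) := by
  obtain ⟨hCne, _, hdeg, hconn⟩ := hcyc
  have hadjab : K.Adj (insert f C) a b := ⟨f, Finset.mem_insert_self f C, hends⟩
  have hfib : ∀ p q : V, clp a b p = clp a b q →
      Relation.ReflTransGen (K.Adj (insert f C)) p q := by
    intro p q h
    rcases clp_eq_cases h with h | ⟨hp, hq⟩
    · exact h ▸ Relation.ReflTransGen.refl
    · rcases hp with hp | hp <;> rcases hq with hq | hq <;> subst hp <;> subst hq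
      · exact Relation.ReflTransGen.refl
      · exact Relation.ReflTransGen.single hadjab
      · exact Relation.ReflTransGen.single (adj_symm hadjab)
      · exact Relation.ReflTransGen.refl
  have hVa : H'.VIn C a := by
    apply vin_of_degIn_pos
    rw [degIn_clp_a hH hab, hdega]
    omega
  have hreach : ∀ w, K.VIn (insert f C) w →
      Relation.ReflTransGen (K.Adj (insert f C)) w a := by
    intro w hw
    obtain ⟨g, hg, hm⟩ := hw
    rcases Finset.mem_insert.mp hg with h | h
    · subst h
      rw [hends, Sym2.mem_iff] at hm
      rcases hm with h | h <;> subst h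
      · exact Relation.ReflTransGen.refl
      · exact Relation.ReflTransGen.single (adj_symm hadjab)
    · have hVC : K.VIn C w := ⟨g, h, hm⟩
      have hp := hconn (clp a b w) a (vin_clp hH hVC) hVa
      obtain ⟨z₀, hz₀, hpath⟩ := rtg_lift (Finset.subset_insert f C) hH hfib hp w rfl
      have hz : z₀ = a ∨ z₀ = b := by
        by_cases h' : z₀ = b
        · exact Or.inr h'
        · left; rwa [clp_of_ne h'] at hz₀
      rcases hz with h' | h'
      · exact h' ▸ hpath
      · exact hpath.trans (h' ▸ Relation.ReflTransGen.single (adj_symm hadjab))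
  have hsymm : Symmetric (K.Adj (insert f C)) := fun x y h => adj_symm h
  refine ⟨Finset.insert_nonempty f C, hKE, ?_, fun p q hp hq =>
    (hreach p hp).trans (by haveI : Std.Symm (K.Adj (insert f C)) := ⟨fun x y h => hsymm h⟩; exact Std.Symm.symm _ _ (hreach q hq))⟩
  intro w hw
  have hsplit : K.degIn (insert f C) w = ctr (K.ends f) w + K.degIn C w := by
    rw [degIn_erase (Finset.mem_insert_self f C), Finset.erase_insert hf]
  by_cases hwa : w = a
  · subst hwa; rw [hsplit, hends, ctr_pair_left hab, hdega]
  by_cases hwb : w = b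
  · subst hwb; rw [hsplit, hends, ctr_pair_right hab, hdegb]
  · rw [hsplit]
    have hctr0 : ctr (K.ends f) w = 0 := by
      rw [hends]
      exact ctr_eq_zero (by rw [Sym2.mem_iff]; push_neg; exact ⟨hwa, hwb⟩)
    have hVC : K.VIn C w := by
      obtain ⟨g, hg, hm⟩ := hw
      rcases Finset.mem_insert.mp hg with h | h
      · subst h; rw [hends, Sym2.mem_iff] at hm; tauto
      · exact ⟨g, h, hm⟩
    have hVH : H'.VIn C w := by
      have := vin_clp hH hVC
      rwa [clp_of_ne hwb] at this
    have h2 := hdeg w hVH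
    have h3 : H'.degIn C w = K.degIn C w := degIn_clp_other hH hwa hwb
    omega

lemma cycle_split :
    ∀ D : Finset α, ∀ (G H : MGraph V α) (u v : V), G.IsCycle D → u ≠ v →
      G.VIn D u → G.VIn D v → D ⊆ H.E →
      (∀ g ∈ D, H.ends g = (G.ends g).map (clp u v)) →
      ∃ C₁ C₂ : Finset α, C₁ ∪ C₂ = D ∧ Disjoint C₁ C₂ ∧ H.IsCycle C₁ ∧ H.IsCycle C₂ := by
  intro D
  induction D using Finset.strongInduction with
  | _ D ih =>
  intro G H u v hD huv hu hv hHE hH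
  obtain ⟨hDne, hDE, hdeg, hconn⟩ := hD
  obtain ⟨f, hfD, hvf⟩ := hv
  obtain ⟨x, hfx⟩ := Sym2.mem_iff_exists.mp hvf
  have hdegv : G.degIn D v = 2 := hdeg v ⟨f, hfD, hvf⟩
  have hxv : x ≠ v := by
    intro hxeqv
    have hloop : G.ends f = s(v,v) := by rw [hfx, hxeqv]
    have hctr2 : ctr (G.ends f) v = 2 := by rw [hloop]; simp [ctr]
    have honly : ∀ g ∈ D, v ∈ G.ends g → g = f := by
      intro g hg hm
      by_contra hne
      have h1 := pair_le_degIn (G := G) (w := v) hg hfD hne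
      have h2 := ctr_pos_iff.mpr hm
      omega
    have hreach : ∀ p q, Relation.ReflTransGen (G.Adj D) p q → p = v → q = v := by
      intro p q h
      induction h with
      | refl => exact id
      | @tail m q _ hadj ih2 =>
        intro hp
        obtain ⟨g, hg, hm⟩ := hadj
        have hmv := ih2 hp
        have hgf : g = f := honly g hg (by rw [hm]; exact Sym2.mem_iff.mpr (Or.inl hmv.symm))
        have hse : s(m, q) = s(v,v) := by rw [← hm, hgf, hloop]
        rw [Sym2.eq_iff] at hse
        tauto
    exact huv (hreach v u (hconn v u ⟨f, hfD, hvf⟩ hu) rfl)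
  have hvx : v ≠ x := Ne.symm hxv
  by_cases hxu : x = u
  · -- base case : f joins v and u
    have hfuv : G.ends f = s(u,v) := by rw [hfx, hxu]; exact Sym2.eq_swap
    have hHf : H.ends f = s(u,u) := by
      rw [hH f hfD, hfx, hxu, Sym2.map_pair_eq, clp_self, clp_of_ne huv]
    have hCyc1 : H.IsCycle {f} := by
      refine ⟨⟨f, Finset.mem_singleton_self f⟩, Finset.singleton_subset_iff.mpr (hHE hfD), ?_, ?_⟩
      · intro w hw
        obtain ⟨g, hg, hm⟩ := hw
        rw [Finset.mem_singleton] at hg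
        subst hg
        rw [hHf, Sym2.mem_iff] at hm
        have hwu : w = u := by tauto
        subst hwu
        rw [degIn_eq, Finset.sum_singleton, hHf]
        simp [ctr]
      · intro p q hp hq
        obtain ⟨g1, hg1, hm1⟩ := hp
        obtain ⟨g2, hg2, hm2⟩ := hq
        rw [Finset.mem_singleton] at hg1 hg2
        subst hg1; subst hg2
        rw [hHf, Sym2.mem_iff] at hm1 hm2
        have hpu : p = u := by tauto
        have hqu : q = u := by tauto
        rw [hpu, hqu]
    have hCyc2 : H.IsCycle (D.erase f) :=
      cycle_contract ⟨hDne, hDE, hdeg, hconn⟩ hfD huv hfuv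
        (fun g hg => hHE (Finset.erase_subset f D hg)) hH
    refine ⟨{f}, D.erase f, ?_, ?_, hCyc1, hCyc2⟩
    · ext g
      simp only [Finset.mem_union, Finset.mem_singleton, Finset.mem_erase]
      constructor
      · rintro (rfl | ⟨_, h⟩)
        · exact hfD
        · exact h
      · intro hg
        by_cases h : g = f
        · exact Or.inl h
        · exact Or.inr ⟨h, hg⟩
    · exact Finset.disjoint_singleton_left.mpr (Finset.notMem_erase f D)
  · -- inductive step
    have hux : u ≠ x := fun h => hxu h.symm
    have hVDx : G.VIn D x := ⟨f, hfD, by rw [hfx]; exact Sym2.mem_mk_right v x⟩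
    have hdegx : G.degIn D x = 2 := hdeg x hVDx
    have hdegu : G.degIn D u = 2 := hdeg u hu
    have hctrfv : ctr (G.ends f) v = 1 := by rw [hfx]; exact ctr_pair_left hvx
    have hctrfx : ctr (G.ends f) x = 1 := by rw [hfx]; exact ctr_pair_right hvx
    have hctrfu : ctr (G.ends f) u = 0 := by
      rw [hfx]
      exact ctr_eq_zero (by rw [Sym2.mem_iff]; push_neg; exact ⟨huv, hux⟩)
    have hdegv' : G.degIn (D.erase f) v = 1 := by
      have := degIn_erase (G := G) (w := v) hfD; omega
    have hdegx' : G.degIn (D.erase f) x = 1 := by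
      have := degIn_erase (G := G) (w := x) hfD; omega
    have hdegu' : G.degIn (D.erase f) u = 2 := by
      have := degIn_erase (G := G) (w := u) hfD; omega
    obtain ⟨gv, hgvD, hgvm⟩ : G.VIn (D.erase f) v := vin_of_degIn_pos (by omega)
    obtain ⟨gx, hgxD, hgxm⟩ : G.VIn (D.erase f) x := vin_of_degIn_pos (by omega)
    have hgv_uniq : ∀ g ∈ D.erase f, v ∈ G.ends g → g = gv :=
      fun g hg hm => unique_edge_at (by omega) hg hgvD hm hgvm
    have hgx_uniq : ∀ g ∈ D.erase f, x ∈ G.ends g → g = gx :=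
      fun g hg hm => unique_edge_at (by omega) hg hgxD hm hgxm
    set G₁ : MGraph V α := ⟨D.erase f, fun g => (G.ends g).map (clp v x)⟩ with hG₁def
    set H₁ : MGraph V α := ⟨D.erase f, fun g => (G₁.ends g).map (clp u v)⟩ with hH₁def
    have hG₁cyc : G₁.IsCycle (D.erase f) :=
      cycle_contract ⟨hDne, hDE, hdeg, hconn⟩ hfD hvx hfx subset_rfl (fun g _ => rfl)
    have hVin1u : G₁.VIn (D.erase f) u := by
      have h0 : G.VIn (D.erase f) u := vin_of_degIn_pos (by omega)
      have h1 := vin_clp (G := G) (H := G₁) (a := v) (b := x) (S := D.erase f) (fun g _ => rfl) h0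
      rwa [clp_of_ne hux] at h1
    have hVin1v : G₁.VIn (D.erase f) v := by
      have h1 := vin_clp (G := G) (H := G₁) (a := v) (b := x) (S := D.erase f)
        (fun g _ => rfl) ⟨gv, hgvD, hgvm⟩
      rwa [clp_of_ne hvx] at h1
    obtain ⟨A, B, hunion, hdisj, hcycA, hcycB⟩ :=
      ih (D.erase f) (Finset.erase_ssubset hfD) G₁ H₁ u v hG₁cyc huv hVin1u hVin1v
        subset_rfl (fun g _ => rfl)
    have hdegH₁u : ∀ S' : Finset α,
        H₁.degIn S' u = G.degIn S' u + (G.degIn S' v + G.degIn S' x) := by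
      intro S'
      rw [degIn_clp_a (G := G₁) (H := H₁) (S := S') (fun g _ => rfl) huv,
          degIn_clp_other (G := G) (H := G₁) (S := S') (fun g _ => rfl) huv hux,
          degIn_clp_a (G := G) (H := G₁) (S := S') (fun g _ => rfl) hvx]
    have hdegH₁w : ∀ (S' : Finset α) (w : V), w ≠ u → w ≠ v → w ≠ x →
        H₁.degIn S' w = G.degIn S' w := by
      intro S' w h1 h2 h3
      rw [degIn_clp_other (G := G₁) (H := H₁) (S := S') (fun g _ => rfl) h1 h2,
          degIn_clp_other (G := G) (H := G₁) (S := S') (fun g _ => rfl) h2 h3]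
    have hvinH₁ : ∀ (S' : Finset α) (w : V), G.VIn S' w → H₁.VIn S' (clp u v (clp v x w)) :=
      fun S' w h => vin_clp (G := G₁) (H := H₁) (fun g _ => rfl)
        (vin_clp (G := G) (H := G₁) (fun g _ => rfl) h)
    have key : ∀ C' ⊆ D.erase f, H₁.IsCycle C' → gv ∉ C' → gx ∉ C' → False := by
      intro C' hC'sub hC'cyc hgvC hgxC
      have hnov : ¬ G.VIn C' v := by
        rintro ⟨g, hg, hm⟩
        exact hgvC (hgv_uniq g (hC'sub hg) hm ▸ hg)
      have hnox : ¬ G.VIn C' x := by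
        rintro ⟨g, hg, hm⟩
        exact hgxC (hgx_uniq g (hC'sub hg) hm ▸ hg)
      have hCeq : C' = D := by
        apply eq_of_subset_cycle ⟨hDne, hDE, hdeg, hconn⟩
          (hC'sub.trans (Finset.erase_subset f D)) hC'cyc.1
        intro w hw
        by_cases hw_u : w = u
        · rw [hw_u] at hw ⊢
          have hVH₁u : H₁.VIn C' u := by
            have h1 := hvinH₁ C' u hw
            rwa [clp_of_ne hux, clp_of_ne huv] at h1
          have h2 := hC'cyc.2.2.1 u hVH₁u
          have h3 := hdegH₁u C'
          have h4 := degIn_eq_zero_of_not_vin (G := G) hnov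
          have h5 := degIn_eq_zero_of_not_vin (G := G) hnox
          omega
        · have hw_v : w ≠ v := fun h => hnov (h ▸ hw)
          have hw_x : w ≠ x := fun h => hnox (h ▸ hw)
          have hVH₁w : H₁.VIn C' w := by
            have h0 := hvinH₁ C' w hw
            rwa [clp_of_ne hw_x, clp_of_ne hw_v] at h0
          have h2 := hC'cyc.2.2.1 w hVH₁w
          rw [← hdegH₁w C' w hw_u hw_v hw_x]
          exact h2
      exact Finset.notMem_erase f D (hC'sub (hCeq.symm ▸ hfD))
    have main : ∀ A' B', A' ∪ B' = D.erase f → Disjoint A' B' → H₁.IsCycle A' → H₁.IsCycle B' →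
        gv ∈ A' → gx ∈ B' →
        ∃ C₁ C₂ : Finset α, C₁ ∪ C₂ = D ∧ Disjoint C₁ C₂ ∧ H.IsCycle C₁ ∧ H.IsCycle C₂ := by
      intro A' B' hun hdj hcA hcB hgvA hgxB
      have hA'sub : A' ⊆ D.erase f := by rw [← hun]; exact Finset.subset_union_left
      have hB'sub : B' ⊆ D.erase f := by rw [← hun]; exact Finset.subset_union_right
      have hgxA : gx ∉ A' := fun h => Finset.disjoint_left.mp hdj h hgxB
      have hgvB : gv ∉ B' := fun h => Finset.disjoint_left.mp hdj hgvA h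
      have hnoxA : ∀ g ∈ A', x ∉ G.ends g := fun g hg hm => hgxA (hgx_uniq g (hA'sub hg) hm ▸ hg)
      have hnovB : ∀ g ∈ B', v ∉ G.ends g := fun g hg hm => hgvB (hgv_uniq g (hB'sub hg) hm ▸ hg)
      have hHA : ∀ g ∈ A', H.ends g = (G.ends g).map (clp u v) :=
        fun g hg => hH g (Finset.erase_subset f D (hA'sub hg))
      have hHB : ∀ g ∈ B', H.ends g = (G.ends g).map (clp u v) :=
        fun g hg => hH g (Finset.erase_subset f D (hB'sub hg))
      have hcycA_H : H.IsCycle A' := by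
        apply isCycle_congr (G := H) (H := H₁) ?_ ?_ hcA
        · intro g hg
          have hxfix : (G.ends g).map (clp v x) = G.ends g :=
            sym2_map_eq_of_fix (fun p hp => clp_of_ne (fun h => hnoxA g hg (h ▸ hp)))
          show ((G.ends g).map (clp v x)).map (clp u v) = H.ends g
          rw [hxfix, ← hHA g hg]
        · exact fun g hg => hHE (Finset.erase_subset f D (hA'sub hg))
      have hdegGBx : G.degIn B' x = 1 := by
        have hub := degIn_mono (G := G) (w := x) hB'sub
        have hlb : 0 < G.degIn B' x := degIn_pos_of_vin ⟨gx, hgxB, hgxm⟩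
        omega
      have hdegGBv : G.degIn B' v = 0 :=
        degIn_eq_zero_of_not_vin (by rintro ⟨g, hg, hm⟩; exact hnovB g hg hm)
      have hVH₁Bu : H₁.VIn B' u := vin_of_degIn_pos (by rw [hdegH₁u B']; omega)
      have hdegH₁Bu := hcB.2.2.1 u hVH₁Bu
      have hdegGBu : G.degIn B' u = 1 := by have := hdegH₁u B'; omega
      have hdegHBu : H.degIn B' u = 1 := by
        rw [degIn_clp_a (G := G) (H := H) hHB huv, hdegGBu, hdegGBv]
      have hdegHBx : H.degIn B' x = 1 := by
        rw [degIn_clp_other (G := G) (H := H) hHB hxu hxv, hdegGBx]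
      have hHf : H.ends f = s(u, x) := by
        rw [hH f hfD, hfx, Sym2.map_pair_eq, clp_self, clp_of_ne hxv]
      have hH₁B : ∀ g ∈ B', H₁.ends g = (H.ends g).map (clp u x) := by
        intro g hg
        rw [hHB g hg]
        show ((G.ends g).map (clp v x)).map (clp u v) = ((G.ends g).map (clp u v)).map (clp u x)
        rw [Sym2.map_map, Sym2.map_map]
        apply sym2_map_congr
        intro p _
        simp only [Function.comp_apply, clp]
        split_ifs <;> simp_all
      have hfB' : f ∉ B' := fun h => Finset.notMem_erase f D (hB'sub h)
      have hKE : insert f B' ⊆ H.E := by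
        intro g hg
        rcases Finset.mem_insert.mp hg with h | h
        · exact h ▸ hHE hfD
        · exact hHE (Finset.erase_subset f D (hB'sub h))
      have hcycB_H : H.IsCycle (insert f B') :=
        cycle_uncontract hux hfB' hHf hH₁B hcB hdegHBu hdegHBx hKE
      refine ⟨A', insert f B', ?_, ?_, hcycA_H, hcycB_H⟩
      · rw [Finset.union_insert, hun, Finset.insert_erase hfD]
      · rw [Finset.disjoint_insert_right]
        exact ⟨fun h => Finset.notMem_erase f D (hA'sub h), hdj⟩
    have hAsub : A ⊆ D.erase f := by rw [← hunion]; exact Finset.subset_union_left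
    have hBsub : B ⊆ D.erase f := by rw [← hunion]; exact Finset.subset_union_right
    rcases Finset.mem_union.mp (hunion.symm ▸ hgvD) with hv1 | hv2 <;>
      rcases Finset.mem_union.mp (hunion.symm ▸ hgxD) with hx1 | hx2
    · exact absurd (key B hBsub hcycB (fun h => Finset.disjoint_left.mp hdisj hv1 h)
        (fun h => Finset.disjoint_left.mp hdisj hx1 h)) (fun h => h)
    · exact main A B hunion hdisj hcycA hcycB hv1 hx2
    · exact main B A (by rw [Finset.union_comm]; exact hunion) hdisj.symm hcycB hcycA hv2 hx1
    · exact absurd (key A hAsub hcycA (fun h => Finset.disjoint_left.mp hdisj h hv2)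
        (fun h => Finset.disjoint_left.mp hdisj h hx2)) (fun h => h)



lemma cycle_of_contract {C : Finset α} {u v : V} (huv : u ≠ v)
    (hH : ∀ g ∈ C, H.ends g = (G.ends g).map (clp u v))
    (hC : H.IsCycle C) (hCE : C ⊆ G.E) :
    G.IsCycle C ∨ (G.degIn C u = 1 ∧ G.degIn C v = 1) := by
  by_cases hVu : H.VIn C u
  · have h2 : H.degIn C u = 2 := hC.2.2.1 u hVu
    rw [degIn_clp_a hH huv] at h2
    by_cases hdu1 : G.degIn C u = 1
    · exact Or.inr ⟨hdu1, by omega⟩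
    by_cases hdu2 : G.degIn C u = 2
    · left
      have hdv0 : G.degIn C v = 0 := by omega
      have hnv : ¬ G.VIn C v := fun h => by
        have := degIn_pos_of_vin (G := G) h; omega
      have hends : ∀ g ∈ C, H.ends g = G.ends g := by
        intro g hg
        rw [hH g hg]
        exact sym2_map_eq_of_fix (fun p hp => clp_of_ne (fun hpb => hnv ⟨g, hg, hpb ▸ hp⟩))
      exact isCycle_congr hends hCE hC
    · have hdu0 : G.degIn C u = 0 := by omega
      have hnu : ¬ G.VIn C u := fun h => by
        have := degIn_pos_of_vin (G := G) h; omega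
      left
      apply cycle_avoid (G := H) (H := G) (a := v) (b := u) (Ne.symm huv) hC hCE ?_ ?_
      · intro g hg
        rw [hH g hg, Sym2.map_map]
        refine (sym2_map_eq_of_fix ?_).symm
        intro p hp
        have hpu : p ≠ u := fun h => hnu ⟨g, hg, h ▸ hp⟩
        by_cases hpv : p = v
        · simp [clp, hpv]
        · simp [clp, hpv, hpu]
      · exact Or.inl (not_vin_clp_b hH huv)
  · left
    have hends : ∀ g ∈ C, H.ends g = G.ends g := by
      intro g hg
      rw [hH g hg]
      apply sym2_map_eq_of_fix
      intro p hp
      apply clp_of_ne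
      intro hpv
      exact absurd ⟨g, hg, by
        rw [hH g hg]
        exact Sym2.mem_map.mpr ⟨p, hp, by rw [hpv, clp_self]⟩⟩ hVu
    exact isCycle_congr hends hCE hC

lemma twoCycles_mono' {X Y : Finset α} (h : X ⊆ Y) (ht : G.TwoCycles X) : G.TwoCycles Y := by
  obtain ⟨C₁, C₂, h1, h2, hs1, hs2, hne⟩ := ht
  exact ⟨C₁, C₂, h1, h2, hs1.trans h, hs2.trans h, hne⟩

lemma exists_circuit_subset' :
    ∀ X : Finset α, X ⊆ G.E → G.TwoCycles X → ∃ C ⊆ X, G.LiftCircuit C := by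
  intro X
  induction X using Finset.strongInduction with
  | _ X ih =>
  intro hXE hTC
  by_cases h : ∃ Y ⊂ X, G.TwoCycles Y
  · obtain ⟨Y, hYX, hYT⟩ := h
    obtain ⟨C, hCY, hC⟩ := ih Y hYX (hYX.subset.trans hXE) hYT
    exact ⟨C, hCY.trans hYX.subset, hC⟩
  · push_neg at h
    exact ⟨X, subset_rfl, hXE, hTC, fun Y hY hYT => (h Y hY) hYT⟩

lemma not_cycle_single {e : α} {u v : V} (huv : u ≠ v) (hends : G.ends e = s(u,v)) :
    ¬ G.IsCycle {e} := by
  intro h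
  have hV : G.VIn {e} u := ⟨e, Finset.mem_singleton_self e, hends ▸ Sym2.mem_mk_left u v⟩
  have h2 := h.2.2.1 u hV
  rw [degIn_eq, Finset.sum_singleton, hends, ctr_pair_left huv] at h2
  omega

lemma erase_nonempty_of_cycle {D : Finset α} {e : α} {u v : V} (huv : u ≠ v)
    (hends : G.ends e = s(u,v)) (hD : G.IsCycle D) : (D.erase e).Nonempty := by
  rcases Finset.eq_empty_or_nonempty (D.erase e) with h | h
  · exfalso
    have hsub : D ⊆ {e} := fun g hg => Finset.mem_singleton.mpr (by
      by_contra hgf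
      exact Finset.notMem_empty g (h ▸ Finset.mem_erase.mpr ⟨hgf, hg⟩))
    obtain ⟨g, hg⟩ := hD.1
    have hge := Finset.mem_singleton.mp (hsub hg)
    have hDeq : D = {e} := Finset.Subset.antisymm hsub
      (Finset.singleton_subset_iff.mpr (hge ▸ hg))
    exact not_cycle_single huv hends (hDeq ▸ hD)
  · exact h

lemma subset_insert_erase' (e : α) (C : Finset α) : C ⊆ insert e (C.erase e) := by
  intro g hg
  by_cases h : g = e
  · subst h; exact Finset.mem_insert_self g _
  · exact Finset.mem_insert_of_mem (Finset.mem_erase.mpr ⟨h, hg⟩)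

lemma contract_twoCycles_iff {G : MGraph V α} {e : α} {u v : V}
    (he : e ∈ G.E) (huv : u ≠ v) (hends : G.ends e = s(u,v))
    {X : Finset α} (heX : e ∉ X) (hXE : X ⊆ G.E) :
    (G.contractLink e u v).TwoCycles X ↔ G.TwoCycles (insert e X) := by
  set H := G.contractLink e u v with hHdef
  have hHends : ∀ (S : Finset α), ∀ g ∈ S, H.ends g = (G.ends g).map (clp u v) :=
    fun S g _ => rfl
  constructor
  · rintro ⟨C₁, C₂, h1, h2, hs1, hs2, hne⟩
    have lift : ∀ C, H.IsCycle C → C ⊆ X →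
        ∃ D, G.IsCycle D ∧ D.erase e = C ∧ D ⊆ insert e X := by
      intro C hC hCX
      have hCE : C ⊆ G.E := fun g hg => hXE (hCX hg)
      have heC : e ∉ C := fun h => heX (hCX h)
      rcases cycle_of_contract huv (hHends C) hC hCE with h | ⟨hdu, hdv⟩
      · exact ⟨C, h, Finset.erase_eq_of_notMem heC, hCX.trans (Finset.subset_insert e X)⟩
      · refine ⟨insert e C, ?_, Finset.erase_insert heC, Finset.insert_subset_insert e hCX⟩
        exact cycle_uncontract huv heC hends (hHends C) hC hdu hdv
          (Finset.insert_subset_iff.mpr ⟨he, hCE⟩)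
    obtain ⟨D₁, hD₁, hDe₁, hDs₁⟩ := lift C₁ h1 hs1
    obtain ⟨D₂, hD₂, hDe₂, hDs₂⟩ := lift C₂ h2 hs2
    refine ⟨D₁, D₂, hD₁, hD₂, hDs₁, hDs₂, fun h => hne ?_⟩
    rw [← hDe₁, ← hDe₂, h]
  · rintro ⟨D₁, D₂, hD₁, hD₂, hs1, hs2, hne⟩
    by_cases hsplit : (e ∉ D₁ ∧ G.VIn D₁ u ∧ G.VIn D₁ v) ∨ (e ∉ D₂ ∧ G.VIn D₂ u ∧ G.VIn D₂ v)
    · obtain ⟨D, hD, hsD, heD, hVu, hVv⟩ :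
          ∃ D, G.IsCycle D ∧ D ⊆ insert e X ∧ e ∉ D ∧ G.VIn D u ∧ G.VIn D v := by
        rcases hsplit with ⟨h1, h2, h3⟩ | ⟨h1, h2, h3⟩
        · exact ⟨D₁, hD₁, hs1, h1, h2, h3⟩
        · exact ⟨D₂, hD₂, hs2, h1, h2, h3⟩
      have hDX : D ⊆ X := by
        intro g hg
        rcases Finset.mem_insert.mp (hsD hg) with h | h
        · exact absurd (h ▸ hg) heD
        · exact h
      have hDH : D ⊆ H.E := fun g hg =>
        Finset.mem_erase.mpr ⟨fun h => heD (h ▸ hg), hD.2.1 hg⟩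
      obtain ⟨C₁, C₂, hun, hdj, hc1, hc2⟩ :=
        cycle_split D G H u v hD huv hVu hVv hDH (hHends D)
      refine ⟨C₁, C₂, hc1, hc2, ?_, ?_, ?_⟩
      · intro g hg
        exact hDX (hun ▸ Finset.mem_union_left C₂ hg)
      · intro g hg
        exact hDX (hun ▸ Finset.mem_union_right C₁ hg)
      · intro h
        obtain ⟨g, hg⟩ := hc1.1
        exact Finset.disjoint_left.mp hdj hg (h ▸ hg)
    · have proj : ∀ D, G.IsCycle D → D ⊆ insert e X → ¬(e ∉ D ∧ G.VIn D u ∧ G.VIn D v) →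
          H.IsCycle (D.erase e) ∧ D.erase e ⊆ X := by
        intro D hD hsD hnot
        have hDX' : D.erase e ⊆ X := by
          intro g hg
          obtain ⟨hge, hgD⟩ := Finset.mem_erase.mp hg
          rcases Finset.mem_insert.mp (hsD hgD) with h | h
          · exact absurd h hge
          · exact h
        by_cases heD : e ∈ D
        · exact ⟨cycle_contract hD heD huv hends
            (Finset.erase_subset_erase e hD.2.1) (hHends D), hDX'⟩
        · have hnotuv : ¬ G.VIn D u ∨ ¬ G.VIn D v := by tauto
          have hDH : D ⊆ H.E := fun g hg =>
            Finset.mem_erase.mpr ⟨fun h => heD (h ▸ hg), hD.2.1 hg⟩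
          have hcy := cycle_avoid huv hD hDH (hHends D) hnotuv
          rw [Finset.erase_eq_of_notMem heD]
          exact ⟨hcy, fun g hg => hDX' (Finset.mem_erase.mpr ⟨fun hh => heD (hh ▸ hg), hg⟩)⟩
      obtain ⟨hc1, hx1⟩ := proj D₁ hD₁ hs1 (fun h => hsplit (Or.inl h))
      obtain ⟨hc2, hx2⟩ := proj D₂ hD₂ hs2 (fun h => hsplit (Or.inr h))
      refine ⟨_, _, hc1, hc2, hx1, hx2, ?_⟩
      intro hEe
      have mixed : ∀ Da Db : Finset α, G.IsCycle Da → G.IsCycle Db → e ∈ Da → e ∉ Db →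
          Da.erase e = Db.erase e → False := by
        intro Da Db hDa hDb ha hb hE
        have hDbeq : Db = Da.erase e := by
          rw [hE, Finset.erase_eq_of_notMem hb]
        have hVua : G.VIn Da u := ⟨e, ha, hends ▸ Sym2.mem_mk_left u v⟩
        have hdeg1 := hDa.2.2.1 u hVua
        have hsplit1 := degIn_erase (G := G) (w := u) ha
        have hctr : ctr (G.ends e) u = 1 := by rw [hends]; exact ctr_pair_left huv
        have hdu2 : G.degIn Db u = 1 := by rw [hDbeq]; omega
        have hVu2 : G.VIn Db u := vin_of_degIn_pos (by omega)
        have h2 := hDb.2.2.1 u hVu2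
        omega
      by_cases h1 : e ∈ D₁ <;> by_cases h2 : e ∈ D₂
      · apply hne
        rw [← Finset.insert_erase h1, ← Finset.insert_erase h2, hEe]
      · exact mixed D₁ D₂ hD₁ hD₂ h1 h2 hEe
      · exact mixed D₂ D₁ hD₂ hD₁ h2 h1 hEe.symm
      · apply hne
        rw [← Finset.erase_eq_of_notMem h1, ← Finset.erase_eq_of_notMem h2, hEe]

theorem lift_contract_link_eq' {G : MGraph V α}
    {e : α} (he : e ∈ G.E) {u v : V} (huv : u ≠ v) (hends : G.ends e = s(u, v)) :
    ∀ X : Finset α,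
      MGraph.ContractCircuit G.LiftCircuit e X ↔ (G.contractLink e u v).LiftCircuit X := by
  intro X
  set H := G.contractLink e u v with hHdef
  have hGE : H.E = G.E.erase e := rfl
  constructor
  · rintro ⟨⟨hXne, C, hC, hXeq⟩, hmin⟩
    subst hXeq
    have hCE := hC.1
    have heX : e ∉ C.erase e := Finset.notMem_erase e C
    have hXE : C.erase e ⊆ G.E := (Finset.erase_subset e C).trans hCE
    refine ⟨Finset.erase_subset_erase e hCE, ?_, ?_⟩
    · rw [contract_twoCycles_iff he huv hends heX hXE]
      exact twoCycles_mono' (subset_insert_erase' e C) hC.2.1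
    · intro Y hY hYT
      have heY : e ∉ Y := fun h => heX (hY.subset h)
      have hYE : Y ⊆ G.E := hY.subset.trans hXE
      rw [contract_twoCycles_iff he huv hends heY hYE] at hYT
      have hiE : insert e Y ⊆ G.E := Finset.insert_subset_iff.mpr ⟨he, hYE⟩
      obtain ⟨C'', hC''sub, hC''⟩ := exists_circuit_subset' (insert e Y) hiE hYT
      apply hmin (C''.erase e)
      · refine lt_of_le_of_lt ?_ hY
        intro g hg
        obtain ⟨hge, hgC⟩ := Finset.mem_erase.mp hg
        rcases Finset.mem_insert.mp (hC''sub hgC) with h | h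
        · exact absurd h hge
        · exact h
      · refine ⟨?_, C'', hC'', rfl⟩
        obtain ⟨Ca, _, ha, _, hsa, _, _⟩ := hC''.2.1
        obtain ⟨g, hg⟩ := erase_nonempty_of_cycle huv hends ha
        exact ⟨g, Finset.erase_subset_erase e hsa hg⟩
  · rintro ⟨hXE, hXT, hmin⟩
    have heX : e ∉ X := fun h => (Finset.mem_erase.mp (hXE h)).1 rfl
    have hXE' : X ⊆ G.E := hXE.trans (Finset.erase_subset e G.E)
    have hXT' := (contract_twoCycles_iff he huv hends heX hXE').mp hXT
    have hiE : insert e X ⊆ G.E := Finset.insert_subset_iff.mpr ⟨he, hXE'⟩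
    obtain ⟨C, hCsub, hC⟩ := exists_circuit_subset' (insert e X) hiE hXT'
    have hCX : C.erase e ⊆ X := by
      intro g hg
      obtain ⟨hge, hgC⟩ := Finset.mem_erase.mp hg
      rcases Finset.mem_insert.mp (hCsub hgC) with h | h
      · exact absurd h hge
      · exact h
    have hXeq : C.erase e = X := by
      by_contra hne
      have hss : C.erase e ⊂ X := lt_of_le_of_ne hCX hne
      have heC' : e ∉ C.erase e := Finset.notMem_erase e C
      have hCE' : C.erase e ⊆ G.E := hCX.trans hXE'
      exact hmin _ hss ((contract_twoCycles_iff he huv hends heC' hCE').mpr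
        (twoCycles_mono' (subset_insert_erase' e C) hC.2.1))
    have hXne : X.Nonempty := by
      obtain ⟨C₁, C₂, h1, h2, hs1, _, _⟩ := hXT
      obtain ⟨g, hg⟩ := h1.1
      exact ⟨g, hs1 hg⟩
    refine ⟨⟨hXne, C, hC, hXeq.symm⟩, ?_⟩
    rintro Y hY ⟨hYne, C', hC', hYeq⟩
    subst hYeq
    have heY : e ∉ C'.erase e := Finset.notMem_erase e C'
    have hYE : C'.erase e ⊆ G.E := (Finset.erase_subset e C').trans hC'.1
    exact hmin _ hY ((contract_twoCycles_iff he huv hends heY hYE).mpr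
      (twoCycles_mono' (subset_insert_erase' e C') hC'.2.1))

end MGraph

/-- for a link `e` of `G`, `L(G)/e = L(G/e)`. -/
theorem lift_contract_link_eq
    {V α : Type} [DecidableEq V] [DecidableEq α] (G : MGraph V α)
    (e : α) (he : e ∈ G.E) (u v : V) (huv : u ≠ v) (hends : G.ends e = s(u, v)) :
    ∀ X : Finset α,
      MGraph.ContractCircuit G.LiftCircuit e X ↔ (G.contractLink e u v).LiftCircuit X := by
  intro X
  exact MGraph.lift_contract_link_eq' he huv hends X
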